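/- Let I_T(χ, s) denote the analytically continued local torus integral as in the split, inert, or ramified case of the explicit formula: I_T(χ,s) = q^{(2−2s)n_T} L(1,η) (ζ_P(2s−1)/ζ_P(2−2s)) · L(−s+1/2, π, χ)/L(s−1/2, π, χ) for unramified χ (or with factor q^{(1−2s)n_χ} for ramified χ). Then I_T(χ, 0) = 0 if and only if χ(t) = α^{ν(det t)} for all t, where α = ±1. -/

import Mathlib

/-- Exceptional zero criterion: the analytically continued local torus
integral, at `s = 0`, equals
`I_T(χ,0) = q^{2n_T}·L(1,η)·(ζ(−1)/ζ(2))·L(1/2,π,χ)/L(−1/2,π,χ)` for unramified `χ`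
(given by `t = χ(ϖ)`, with split L-factors, `ζ(−1)/ζ(2) = (1−q⁻²)/(1−q)` and
`α = ±1`); it vanishes if and only if `χ(ϖ) = α`, i.e. `χ(t) = α^{ν(det t)}`.
For ramified `χ` the factor is `q^{n_χ}` instead and the value never vanishes. -/
theorem stmt10
    (q : ℝ) (hq : 1 < q) (nT : ℤ) (nχ : ℕ)
    (a t : ℂ) (ha : a = 1 ∨ a = -1) (ht : ‖t‖ = 1) (ht0 : t ≠ 0)
    (Lη : ℂ)
    (hLη : Lη = (1 - (q : ℂ)⁻¹)⁻¹ ∨ Lη = (1 + (q : ℂ)⁻¹)⁻¹ ∨ Lη = 1) :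
    (((q : ℂ) ^ (2 * nT) * Lη * ((1 - ((q : ℂ)⁻¹) ^ 2) / (1 - (q : ℂ))) *
        ((1 - a * t) * (1 - a * t⁻¹) /
          ((1 - a * t * (q : ℂ)⁻¹) * (1 - a * t⁻¹ * (q : ℂ)⁻¹))) = 0)
      ↔ t = a)
    ∧ (q : ℂ) ^ (2 * nT) * Lη * ((1 - ((q : ℂ)⁻¹) ^ 2) / (1 - (q : ℂ))) *
        (q : ℂ) ^ (nχ : ℕ) ≠ 0 := by
  have hq0r : (0:ℝ) < q := lt_trans one_pos hq
  have hq0 : (q:ℂ) ≠ 0 := by exact_mod_cast ne_of_gt hq0r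
  have ha1 : ‖a‖ = 1 := by rcases ha with h | h <;> simp [h]
  have hqi : ‖((q:ℂ)⁻¹)‖ < 1 := by
    rw [norm_inv, Complex.norm_of_nonneg hq0r.le]
    exact inv_lt_one_of_one_lt₀ hq
  have habs1 : ∀ z : ℂ, ‖z‖ < 1 → (1 : ℂ) - z ≠ 0 := by
    intro z hz h
    have : z = 1 := by linear_combination -h
    simp [this] at hz
  have habs1' : ∀ z : ℂ, ‖z‖ < 1 → (1 : ℂ) + z ≠ 0 := by
    intro z hz h
    have : z = -1 := by linear_combination h
    simp [this] at hz
  have hL : Lη ≠ 0 := by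
    rcases hLη with h | h | h <;> rw [h]
    · exact inv_ne_zero (habs1 _ hqi)
    · exact inv_ne_zero (habs1' _ hqi)
    · exact one_ne_zero
  have hq1 : (1:ℂ) - (q:ℂ) ≠ 0 := by
    intro h
    have : (q:ℂ) = 1 := by linear_combination -h
    have : q = 1 := by exact_mod_cast this
    linarith
  have hq2 : (1:ℂ) - ((q:ℂ)⁻¹)^2 ≠ 0 := by
    refine habs1 _ ?_
    rw [norm_pow]
    calc ‖((q:ℂ)⁻¹)‖ ^ 2 ≤ ‖((q:ℂ)⁻¹)‖ := by
          nlinarith [norm_nonneg ((q:ℂ)⁻¹)]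
      _ < 1 := hqi
  have hΔ : (q:ℂ) ^ (2 * nT) * Lη * ((1 - ((q : ℂ)⁻¹) ^ 2) / (1 - (q : ℂ))) ≠ 0 :=
    mul_ne_zero (mul_ne_zero (zpow_ne_zero _ hq0) hL) (div_ne_zero hq2 hq1)
  have hti : ‖t⁻¹‖ = 1 := by rw [norm_inv, ht]; norm_num
  have hd1 : (1:ℂ) - a * t * (q:ℂ)⁻¹ ≠ 0 := by
    refine habs1 _ ?_
    rw [norm_mul, norm_mul, ha1, ht, one_mul, one_mul]; exact hqi
  have hd2 : (1:ℂ) - a * t⁻¹ * (q:ℂ)⁻¹ ≠ 0 := by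
    refine habs1 _ ?_
    rw [norm_mul, norm_mul, ha1, hti, one_mul, one_mul]; exact hqi
  have ha2 : a * a = 1 := by rcases ha with h | h <;> simp [h]
  have ha0 : a ≠ 0 := by rcases ha with h | h <;> simp [h]
  constructor
  · constructor
    · intro h
      rcases mul_eq_zero.mp h with h | h
      · exact absurd h hΔ
      rcases div_eq_zero_iff.mp h with h | h
      · rcases mul_eq_zero.mp h with h | h
        · have h1 : a * t = 1 := by linear_combination -h
          calc t = a * (a * t) := by rw [← mul_assoc, ha2, one_mul]
            _ = a := by rw [h1, mul_one]
        · have h1 : a * t⁻¹ = 1 := by linear_combination -h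
          have h2 : a = t := by field_simp at h1; exact h1
          exact h2.symm
      · exact absurd h (mul_ne_zero hd1 hd2)
    · intro h
      subst h
      have hz : (1:ℂ) - t * t = 0 := by rw [ha2]; norm_num
      rw [hz]
      simp
  · exact mul_ne_zero hΔ (pow_ne_zero _ hq0)
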